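/- arXiv:1610.05525 — 4 statements merged into one kernel-verified Lean document; each statement's English description precedes it below -/
import Mathlib

section
/- Let H be a real Banach space, let A, B be bounded linear operators on H, and let t ≥ 0. If ‖exp(sA)‖ ≤ M₁ and ‖exp(s(A+B))‖ ≤ M₂ for all s ∈ [0,t], and ‖B‖ ≤ L, then ‖exp(t(A+B)) − exp(tA)‖ ≤ M₁·L·M₂·t. -/
open NormedSpace

/-- **Difference of exponentials.**
If `‖exp (s • A)‖ ≤ M₁` and `‖exp (s • (A+B))‖ ≤ M₂` for all `s ∈ [0, t]`, and
`‖B‖ ≤ L`, then `‖exp (t • (A+B)) − exp (t • A)‖ ≤ M₁ * L * M₂ * t`. -/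
theorem exp_difference_bound
    {H : Type*} [NormedAddCommGroup H] [NormedSpace ℝ H] [CompleteSpace H]
    (A B : H →L[ℝ] H) (t M₁ M₂ L : ℝ) (ht : 0 ≤ t)
    (hA : ∀ s ∈ Set.Icc (0 : ℝ) t, ‖exp (s • A)‖ ≤ M₁)
    (hAB : ∀ s ∈ Set.Icc (0 : ℝ) t, ‖exp (s • (A + B))‖ ≤ M₂)
    (hB : ‖B‖ ≤ L) :
    ‖exp (t • (A + B)) - exp (t • A)‖ ≤ M₁ * L * M₂ * t := by
  set f : ℝ → (H →L[ℝ] H) := fun s => exp ((t - s) • A) * exp (s • (A + B)) with hf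
  set f' : ℝ → (H →L[ℝ] H) :=
    fun s => exp ((t - s) • A) * (B * exp (s • (A + B))) with hf'
  have hderiv : ∀ s : ℝ, HasDerivAt f (f' s) s := by
    intro s
    have h1 : HasDerivAt (fun u : ℝ => exp ((t - u) • A))
        ((-1 : ℝ) • (exp ((t - s) • A) * A)) s := by
      have := (hasDerivAt_exp_smul_const (𝕂 := ℝ) A (t - s)).scomp s
        ((hasDerivAt_id s).const_sub t)
      simpa [Function.comp_def] using this
    have h2 : HasDerivAt (fun u : ℝ => exp (u • (A + B)))
        ((A + B) * exp (s • (A + B))) s := hasDerivAt_exp_smul_const' (𝕂 := ℝ) (A + B) s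
    have := h1.mul h2
    refine this.congr_deriv ?_
    simp only [neg_one_smul, hf', neg_mul, mul_add, add_mul, mul_assoc]
    abel
  have hM₁ : 0 ≤ M₁ := le_trans (norm_nonneg _) (hA 0 ⟨le_refl _, ht⟩)
  have hM₂ : 0 ≤ M₂ := le_trans (norm_nonneg _) (hAB 0 ⟨le_refl _, ht⟩)
  have hL : 0 ≤ L := le_trans (norm_nonneg _) hB
  have hcont : Continuous f' := by
    apply Continuous.mul
    · exact continuous_iff_continuousAt.2 fun s => ((hasDerivAt_exp_smul_const (𝕂 := ℝ) A (t - s)).scomp s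
        ((hasDerivAt_id s).const_sub t)).continuousAt
    · exact continuous_const.mul (continuous_iff_continuousAt.2 fun s =>
        (hasDerivAt_exp_smul_const' (𝕂 := ℝ) (A + B) s).continuousAt)
  have hftc : f t - f 0 = ∫ s in (0:ℝ)..t, f' s := by
    rw [intervalIntegral.integral_eq_sub_of_hasDerivAt (fun s _ => hderiv s)
      (hcont.intervalIntegrable 0 t)]
  have hf0 : f 0 = exp (t • A) := by simp [hf, exp_zero]
  have hft : f t = exp (t • (A + B)) := by simp [hf, exp_zero]
  have key : exp (t • (A + B)) - exp (t • A) = ∫ s in (0:ℝ)..t, f' s := by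
    rw [← hf0, ← hft]; exact hftc
  rw [key]
  have hbound : ∀ s ∈ Set.uIoc (0:ℝ) t, ‖f' s‖ ≤ M₁ * L * M₂ := by
    intro s hs
    rw [Set.uIoc_of_le ht] at hs
    have hs' : s ∈ Set.Icc (0:ℝ) t := ⟨le_of_lt hs.1, hs.2⟩
    have hts : t - s ∈ Set.Icc (0:ℝ) t := ⟨by linarith [hs.2], by linarith [hs.1]⟩
    calc ‖exp ((t - s) • A) * (B * exp (s • (A + B)))‖
        ≤ ‖exp ((t - s) • A)‖ * (‖B‖ * ‖exp (s • (A + B))‖) :=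
          le_trans (norm_mul_le _ _) (by gcongr; exact norm_mul_le _ _)
      _ ≤ M₁ * (L * M₂) := by
          gcongr
          · exact hA _ hts
          · exact hAB _ hs'
      _ = M₁ * L * M₂ := by ring
  calc ‖∫ s in (0:ℝ)..t, f' s‖ ≤ M₁ * L * M₂ * |t - 0| :=
        intervalIntegral.norm_integral_le_of_norm_le_const hbound
    _ = M₁ * L * M₂ * t := by rw [sub_zero, abs_of_nonneg ht]
end

section
/- Let H be a real Banach space, let A and J be bounded linear operators on H, let F : H → H be continuous, and let u : [a,b] → H be continuously differentiable with u'(t) = A(u(t)) + F(u(t)) for all t ∈ [a,b]. Then u(b) = exp((b−a)(A+J))(u(a)) + ∫_a^b exp((b−s)(A+J))(F(u(s)) − J(u(s))) ds, where the integral is the Bochner integral. -/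
open NormedSpace

/-- **Variation of constants after linearization.**
Let `A`, `J` be bounded operators on a real Banach space `H`, `F : H → H`
continuous, and `u : [a,b] → H` continuously differentiable with
`u' = A u + F (u)` on `[a,b]`.  Then
`u(b) = exp ((b−a)(A+J)) (u a) + ∫_a^b exp ((b−s)(A+J)) (F (u s) − J (u s)) ds`. -/
theorem variation_of_constants_linearized
    {H : Type*} [NormedAddCommGroup H] [NormedSpace ℝ H] [CompleteSpace H]
    (A J : H →L[ℝ] H) (F : H → H) (hF : Continuous F)
    (a b : ℝ) (hab : a ≤ b) (u : ℝ → H)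
    (hu : ∀ t ∈ Set.Icc a b, HasDerivAt u (A (u t) + F (u t)) t) :
    u b = exp ((b - a) • (A + J)) (u a) +
      ∫ s in a..b, exp ((b - s) • (A + J)) (F (u s) - J (u s)) := by
  set B : H →L[ℝ] H := A + J with hB
  set v : ℝ → H := fun s => exp ((b - s) • B) (u s) with hv
  have hderiv : ∀ s ∈ Set.uIcc a b,
      HasDerivAt v (exp ((b - s) • B) (F (u s) - J (u s))) s := by
    intro s hs
    rw [Set.uIcc_of_le hab] at hs
    have hg : HasDerivAt (fun s : ℝ => exp ((b - s) • B))
        ((-1 : ℝ) • (exp ((b - s) • B) * B)) s := by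
      have h1 : HasDerivAt (fun r : ℝ => exp (r • B))
          (exp ((b - s) • B) * B) (b - s) := hasDerivAt_exp_smul_const B (b - s)
      have h2 : HasDerivAt (fun s : ℝ => b - s) (-1 : ℝ) s := by
        simpa using (hasDerivAt_id s).const_sub b
      exact h1.scomp s h2
    have := hg.clm_apply (hu s hs)
    convert this using 1
    simp only [ContinuousLinearMap.neg_apply, ContinuousLinearMap.smul_apply,
      ContinuousLinearMap.mul_apply, hB, ContinuousLinearMap.add_apply, map_add, map_sub,
      neg_one_smul]
    abel
  have hucont : ContinuousOn u (Set.uIcc a b) := fun t ht =>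
    (hu t (by rwa [Set.uIcc_of_le hab] at ht)).continuousAt.continuousWithinAt
  have hint : IntervalIntegrable
      (fun s => exp ((b - s) • B) (F (u s) - J (u s))) MeasureTheory.volume a b := by
    apply ContinuousOn.intervalIntegrable
    apply ContinuousOn.clm_apply
    · exact (continuous_iff_continuousAt.2 fun s =>
        (hasDerivAt_exp_smul_const B (b - s)).continuousAt.comp
          (continuous_const.sub continuous_id).continuousAt).continuousOn
    · exact (hF.comp_continuousOn hucont).sub (J.continuous.comp_continuousOn hucont)
  have key := intervalIntegral.integral_eq_sub_of_hasDerivAt hderiv hint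
  have hvb : v b = u b := by simp [hv]
  have hva : v a = exp ((b - a) • B) (u a) := rfl
  rw [key, hvb, hva]
  abel
end

section
/- Let H be a real Banach space, let T > 0, let A be a bounded linear operator on H with ‖exp(tA)‖ ≤ M for all t ∈ [0,T], and let F : H → H be Fréchet differentiable with ‖F'(v)‖ ≤ L for all v ∈ H. If u : [0,T] → H is continuously differentiable and satisfies u'(t) = A(u(t)) + F(u(t)) for all t ∈ [0,T], then ‖u'(t)‖ ≤ M·e^{M·L·t}·‖A(u(0)) + F(u(0))‖ for all t ∈ [0,T]. -/
open NormedSpace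

/-- **Bound on the first time derivative of the solution.**
Let `A` be a bounded operator with `‖exp (t A)‖ ≤ M` on `[0,T]` and `F` Fréchet
differentiable with `‖F'(v)‖ ≤ L` for all `v`.  If `u : [0,T] → H` is continuously
differentiable with `u'(t) = A (u t) + F (u t)` on `[0,T]`, then
`‖u'(t)‖ ≤ M e^{M L t} ‖A (u 0) + F (u 0)‖` on `[0,T]`. -/
theorem first_derivative_bound
    {H : Type*} [NormedAddCommGroup H] [NormedSpace ℝ H] [CompleteSpace H]
    (T : ℝ) (hT : 0 < T) (A : H →L[ℝ] H) (M : ℝ)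
    (hA : ∀ t ∈ Set.Icc (0 : ℝ) T, ‖exp (t • A)‖ ≤ M)
    (F : H → H) (L : ℝ)
    (hFdiff : Differentiable ℝ F) (hF' : ∀ v : H, ‖fderiv ℝ F v‖ ≤ L)
    (u : ℝ → H)
    (hu : ∀ t ∈ Set.Icc (0 : ℝ) T, HasDerivAt u (A (u t) + F (u t)) t) :
    ∀ t ∈ Set.Icc (0 : ℝ) T,
      ‖A (u t) + F (u t)‖ ≤ M * Real.exp (M * L * t) * ‖A (u 0) + F (u 0)‖ := by
  set w : ℝ → H := fun s => A (u s) + F (u s) with hw_def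
  have hM0 : 0 ≤ M := le_trans (norm_nonneg _) (hA 0 ⟨le_refl _, hT.le⟩)
  have hL0 : 0 ≤ L := le_trans (norm_nonneg _) (hF' 0)
  set C : ℝ := ‖w 0‖ with hC_def
  have hC0 : 0 ≤ C := norm_nonneg _
  -- derivative of w on Icc
  have hw : ∀ s ∈ Set.Icc (0:ℝ) T,
      HasDerivAt w (A (w s) + fderiv ℝ F (u s) (w s)) s := by
    intro s hs
    have h1 : HasDerivAt (fun r => A (u r)) (A (w s)) s :=
      A.hasFDerivAt.comp_hasDerivAt s (hu s hs)
    have h2 : HasDerivAt (fun r => F (u r)) (fderiv ℝ F (u s) (w s)) s :=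
      (hFdiff (u s)).hasFDerivAt.comp_hasDerivAt s (hu s hs)
    exact h1.add h2
  -- clamp function
  set c : ℝ → ℝ := fun s => min (max s 0) T with hc_def
  have hc_mem : ∀ s, c s ∈ Set.Icc (0:ℝ) T := fun s =>
    ⟨le_min (le_max_right _ _) hT.le, min_le_right _ _⟩
  have hc_eq : ∀ s ∈ Set.Icc (0:ℝ) T, c s = s := by
    intro s hs
    simp [hc_def, max_eq_left hs.1, min_eq_left hs.2]
  have hc_cont : Continuous c := (continuous_id.max continuous_const).min continuous_const
  set ρ : ℝ → ℝ := fun s => ‖w (c s)‖ with hρ_def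
  have hρ_cont : Continuous ρ := by
    rw [continuous_iff_continuousAt]
    intro s
    exact ((hw _ (hc_mem s)).continuousAt.comp (hc_cont.continuousAt)).norm
  have hρ_eq : ∀ s ∈ Set.Icc (0:ℝ) T, ρ s = ‖w s‖ := by
    intro s hs; simp [hρ_def, hc_eq s hs]
  have hρ_nonneg : ∀ s, 0 ≤ ρ s := fun s => norm_nonneg _
  set φ : ℝ → ℝ := fun x => ∫ s in (0:ℝ)..x, ρ s with hφ_def
  have hφ' : ∀ x, HasDerivAt φ (ρ x) x := fun x =>
    (hρ_cont.integral_hasStrictDerivAt 0 x).hasDerivAt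
  have hφ0 : φ 0 = 0 := intervalIntegral.integral_same
  have hφ_nonneg : ∀ x, 0 ≤ x → 0 ≤ φ x := by
    intro x hx
    exact intervalIntegral.integral_nonneg hx (fun s _ => hρ_nonneg s)
  -- Step A: Duhamel-type inequality
  have key : ∀ r ∈ Set.Icc (0:ℝ) T, ‖w r‖ ≤ M * C + M * L * φ r := by
    intro r hr
    set g : ℝ → H := fun s => exp ((r - s) • A) (w s) with hg_def
    have hg' : ∀ s ∈ Set.Icc (0:ℝ) r,
        HasDerivAt g (exp ((r - s) • A) (fderiv ℝ F (u s) (w s))) s := by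
      intro s hs
      have hsmem : s ∈ Set.Icc (0:ℝ) T := ⟨hs.1, hs.2.trans hr.2⟩
      have h0 : HasDerivAt (fun x : ℝ => r - x) (-1) s := (hasDerivAt_id s).const_sub r
      have hE : HasDerivAt (fun s : ℝ => exp ((r - s) • A))
          ((-1 : ℝ) • (exp ((r - s) • A) * A)) s :=
        (hasDerivAt_exp_smul_const (𝕂 := ℝ) A (r - s)).scomp s h0
      have := hE.clm_apply (hw s hsmem)
      convert this using 1
      simp only [neg_smul, one_smul, ContinuousLinearMap.neg_apply,
        ContinuousLinearMap.mul_apply, map_add]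
      abel
    have hB' : ∀ x : ℝ, HasDerivAt (fun s => M * C + M * L * φ s) (M * L * ρ x) x :=
      fun x => ((hφ' x).const_mul (M * L)).const_add (M * C)
    have bound : ∀ s ∈ Set.Ico (0:ℝ) r,
        ‖exp ((r - s) • A) (fderiv ℝ F (u s) (w s))‖ ≤ M * L * ρ s := by
      intro s hs
      have hsmem : s ∈ Set.Icc (0:ℝ) T := ⟨hs.1, hs.2.le.trans hr.2⟩
      have hrs : r - s ∈ Set.Icc (0:ℝ) T :=
        ⟨sub_nonneg.2 hs.2.le, (sub_le_self r hs.1).trans hr.2⟩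
      calc ‖exp ((r - s) • A) (fderiv ℝ F (u s) (w s))‖
          ≤ ‖exp ((r - s) • A)‖ * ‖fderiv ℝ F (u s) (w s)‖ :=
            ContinuousLinearMap.le_opNorm _ _
        _ ≤ M * (L * ‖w s‖) := by
            apply mul_le_mul (hA _ hrs)
            · calc ‖fderiv ℝ F (u s) (w s)‖ ≤ ‖fderiv ℝ F (u s)‖ * ‖w s‖ :=
                    ContinuousLinearMap.le_opNorm _ _
                _ ≤ L * ‖w s‖ := mul_le_mul_of_nonneg_right (hF' _) (norm_nonneg _)
            · exact norm_nonneg _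
            · exact hM0
        _ = M * L * ρ s := by rw [hρ_eq s hsmem, mul_assoc]
    have ha0 : ‖g 0‖ ≤ M * C + M * L * φ 0 := by
      have : ‖g 0‖ ≤ M * C := by
        calc ‖g 0‖ ≤ ‖exp ((r - 0) • A)‖ * ‖w 0‖ := ContinuousLinearMap.le_opNorm _ _
          _ ≤ M * C := mul_le_mul_of_nonneg_right
              (by rw [sub_zero]; exact hA r hr) (norm_nonneg _)
      simpa [hφ0] using this
    have := image_norm_le_of_norm_deriv_right_le_deriv_boundary
      (f := g) (f' := fun s => exp ((r - s) • A) (fderiv ℝ F (u s) (w s)))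
      (a := 0) (b := r)
      (fun s hs => (hg' s hs).continuousAt.continuousWithinAt)
      (fun s hs => (hg' s (Set.Ico_subset_Icc_self hs)).hasDerivWithinAt)
      ha0 hB' bound
    have hgr := this (Set.right_mem_Icc.2 hr.1)
    have hgr_eq : g r = w r := by
      simp [hg_def, sub_self, zero_smul, exp_zero]
    rwa [hgr_eq] at hgr
  -- Step B: Grönwall
  have gron : ∀ x ∈ Set.Icc (0:ℝ) T, ‖φ x‖ ≤ gronwallBound 0 (M * L) (M * C) (x - 0) := by
    apply norm_le_gronwallBound_of_norm_deriv_right_le (f := φ) (f' := ρ)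
    · exact fun x _ => (hφ' x).continuousAt.continuousWithinAt
    · exact fun x _ => (hφ' x).hasDerivWithinAt
    · simp [hφ0]
    · intro x hx
      have hxmem : x ∈ Set.Icc (0:ℝ) T := ⟨hx.1, hx.2.le⟩
      have hφx : ‖φ x‖ = φ x := abs_of_nonneg (hφ_nonneg x hx.1)
      have h1 : ‖ρ x‖ = ‖w x‖ := by rw [Real.norm_eq_abs, abs_of_nonneg (hρ_nonneg x), hρ_eq x hxmem]
      rw [h1, hφx]
      calc ‖w x‖ ≤ M * C + M * L * φ x := key x hxmem
        _ = M * L * φ x + M * C := by ring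
  intro t ht
  have hφt : φ t ≤ gronwallBound 0 (M * L) (M * C) t := by
    have := gron t ht
    rwa [sub_zero, Real.norm_eq_abs, abs_of_nonneg (hφ_nonneg t ht.1)] at this
  have hML : 0 ≤ M * L := mul_nonneg hM0 hL0
  have hmain : ‖w t‖ ≤ M * C + M * L * gronwallBound 0 (M * L) (M * C) t :=
    (key t ht).trans (by nlinarith [mul_le_mul_of_nonneg_left hφt hML])
  show ‖w t‖ ≤ M * Real.exp (M * L * t) * C
  by_cases hK : M * L = 0
  · rw [hK] at hmain ⊢
    simpa using hmain
  · rw [gronwallBound_of_K_ne_0 hK] at hmain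
    have hKne : M * L ≠ 0 := hK
    calc ‖w t‖ ≤ M * C + M * L * (0 * Real.exp (M * L * t)
        + M * C / (M * L) * (Real.exp (M * L * t) - 1)) := hmain
      _ = M * Real.exp (M * L * t) * C := by
          rw [show M * L * (0 * Real.exp (M * L * t) + M * C / (M * L) * (Real.exp (M * L * t) - 1))
            = (M * L * (M * C / (M * L))) * (Real.exp (M * L * t) - 1) by ring,
            mul_div_cancel₀ _ hKne]; ring
end

section
/- Let H be a real Banach space, let T > 0, and let A be a bounded linear operator on H with ‖exp(tA)‖ ≤ M for all t ∈ [0,T]. Let F : H → H be twice Fréchet differentiable and satisfy ‖F(u) − F(v)‖ ≤ L·‖u − v‖, ‖F'(v)‖ ≤ L and ‖F''(v)‖ ≤ L for all u, v ∈ H. Let u : [0,T] → H be twice continuously differentiable with u'(t) = A(u(t)) + F(u(t)) for all t ∈ [0,T], and set K₁ := sup_{t∈[0,T]} ‖u'(t)‖ and K₂ := sup_{t∈[0,T]} ‖u''(t)‖. Fix an integer N ≥ 1, set Δt := T/N and t_n := n·Δt, and define the exponential Rosenbrock–Euler approximations by u₀ := u(0) and u_{n+1} := exp(Δt·K_n)(u_n)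 + (∫₀^{Δt} exp(s·K_n) ds)(F(u_n) − J_n(u_n)) for 0 ≤ n ≤ N−1, where J_n := F'(u_n) and K_n := A + J_n. Then there exists a constant C, depending only on M, L, T, K₁ and K₂ (and not on N, n or Δt), such that ‖u(t_n) − u_n‖ ≤ C·Δt² for all 0 ≤ n ≤ N. -/
open NormedSpace

/-- The **exponential Rosenbrock–Euler scheme** with step size `Δt` and initial
value `u0`:  `u_{n+1} = exp (Δt K_n) u_n + (∫₀^{Δt} exp (s K_n) ds) (F u_n − J_n u_n)`,
where `J_n := F'(u_n)` and `K_n := A + J_n`. -/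
noncomputable def erem {H : Type*} [NormedAddCommGroup H] [NormedSpace ℝ H]
    [CompleteSpace H] (A : H →L[ℝ] H) (F : H → H) (Δt : ℝ) (u0 : H) : ℕ → H
  | 0 => u0
  | n + 1 =>
      let un := erem A F Δt u0 n
      let K := A + fderiv ℝ F un
      exp (Δt • K) un +
        (∫ s in (0 : ℝ)..Δt, exp (s • K)) (F un - fderiv ℝ F un un)

section aux
variable {H : Type*} [NormedAddCommGroup H] [NormedSpace ℝ H] [CompleteSpace H]

lemma expApplyCont (K : H →L[ℝ] H) (y : H) : Continuous fun s : ℝ => exp (s • K) y :=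
  (continuous_iff_continuousAt.2 fun s => (hasDerivAt_exp_smul_const' (𝕂 := ℝ) K s).continuousAt).clm_apply continuous_const

lemma intExpDeriv (K : H →L[ℝ] H) (y : H) (s : ℝ) :
    HasDerivAt (fun t : ℝ => ∫ σ in (0:ℝ)..t, exp (σ • K) y) (exp (s • K) y) s :=
  ((expApplyCont K y).integral_hasStrictDerivAt 0 s).hasDerivAt

lemma expApplyDeriv (K : H →L[ℝ] H) (y : H) (s : ℝ) :
    HasDerivAt (fun t : ℝ => exp (t • K) y) (K (exp (s • K) y)) s := by
  have h1 : HasDerivAt (fun t : ℝ => exp (t • K)) (K * exp (s • K)) s :=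
    hasDerivAt_exp_smul_const' K s
  have := h1.clm_apply (hasDerivAt_const s y)
  simpa using this

lemma expApplyIdent (K : H →L[ℝ] H) (y : H) (s : ℝ) :
    exp (s • K) y = K (∫ σ in (0:ℝ)..s, exp (σ • K) y) + y := by
  set φ : ℝ → H := fun t => exp (t • K) y - K (∫ σ in (0:ℝ)..t, exp (σ • K) y) with hφ
  have hd : ∀ t : ℝ, HasDerivAt φ 0 t := by
    intro t
    have h1 := expApplyDeriv K y t
    have h2 : HasDerivAt (fun t : ℝ => K (∫ σ in (0:ℝ)..t, exp (σ • K) y))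
        (K (exp (t • K) y)) t :=
      K.hasFDerivAt.comp_hasDerivAt t (intExpDeriv K y t)
    simpa using h1.fun_sub h2
  have hconst : φ s = φ 0 :=
    is_const_of_deriv_eq_zero (fun t => (hd t).differentiableAt)
      (fun t => (hd t).deriv) s 0
  have h0 : φ 0 = y := by
    simp [hφ, intervalIntegral.integral_same]
  have := hconst.trans h0
  simp only [hφ] at this
  linear_combination (norm := abel) this

lemma schemeDeriv (K : H →L[ℝ] H) (x c : H) (s : ℝ) :
    HasDerivAt (fun t : ℝ => exp (t • K) x + ∫ σ in (0:ℝ)..t, exp (σ • K) c)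
      (K (exp (s • K) x + ∫ σ in (0:ℝ)..s, exp (σ • K) c) + c) s := by
  have h := (expApplyDeriv K x s).fun_add (intExpDeriv K c s)
  convert h using 1
  rw [expApplyIdent K c s, map_add]
  abel

lemma gronwallBound_le_aux {δ K ε x : ℝ} (hδ : 0 ≤ δ) (hK : 0 ≤ K) (hε : 0 ≤ ε) (hx : 0 ≤ x) :
    gronwallBound δ K ε x ≤ Real.exp (K * x) * (δ + ε * x) := by
  rcases eq_or_lt_of_le hK with h | h
  · rw [← h, gronwallBound_K0]
    simp only [zero_mul, Real.exp_zero, one_mul]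
    exact le_refl _
  · rw [gronwallBound_of_K_ne_0 (ne_of_gt h)]
    have key : Real.exp (K * x) - 1 ≤ K * x * Real.exp (K * x) := by
      have h1 : 1 - K * x ≤ Real.exp (-(K * x)) := by
        have := Real.add_one_le_exp (-(K * x)); linarith
      have h2 : Real.exp (K * x) * (1 - K * x) ≤ Real.exp (K * x) * Real.exp (-(K * x)) :=
        mul_le_mul_of_nonneg_left h1 (Real.exp_pos _).le
      rw [← Real.exp_add] at h2
      simp only [add_neg_cancel, Real.exp_zero] at h2
      nlinarith
    have h3 : ε / K * (Real.exp (K * x) - 1) ≤ ε / K * (K * x * Real.exp (K * x)) :=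
      mul_le_mul_of_nonneg_left key (div_nonneg hε h.le)
    have h4 : ε / K * (K * x * Real.exp (K * x)) = ε * (x * Real.exp (K * x)) := by
      field_simp
    nlinarith [h3, h4]


end aux

set_option maxHeartbeats 2000000

/-- **Second-order convergence of the exponential Rosenbrock–Euler method.**
Let `A` be a bounded operator on a real Banach space with `‖exp (t A)‖ ≤ M` on
`[0,T]`, and let `F` be twice Fréchet differentiable, globally Lipschitz with
constant `L`, with `‖F'(v)‖ ≤ L` and `‖F''(v)‖ ≤ L` for all `v`.  Let
`u : [0,T] → H` be twice continuously differentiable with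
`u'(t) = A (u t) + F (u t)` on `[0,T]`.  Then there is a constant `C`
(depending only on `M`, `L`, `T` and the bounds `K₁ = sup ‖u'‖`, `K₂ = sup ‖u''‖`,
but not on `N`, `n` or `Δt`) such that for every `N ≥ 1`, with `Δt := T/N` and
`t_n := n Δt`, the exponential Rosenbrock–Euler approximations `u_n` started at
`u₀ := u(0)` satisfy `‖u(t_n) − u_n‖ ≤ C Δt²` for all `0 ≤ n ≤ N`. -/
theorem erem_second_order_convergence
    {H : Type*} [NormedAddCommGroup H] [NormedSpace ℝ H] [CompleteSpace H]
    (T : ℝ) (hT : 0 < T) (A : H →L[ℝ] H) (M : ℝ)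
    (hA : ∀ t ∈ Set.Icc (0 : ℝ) T, ‖exp (t • A)‖ ≤ M)
    (F : H → H) (L : ℝ)
    (hFlip : ∀ x y : H, ‖F x - F y‖ ≤ L * ‖x - y‖)
    (hFdiff : Differentiable ℝ F)
    (hFdiff2 : Differentiable ℝ (fderiv ℝ F))
    (hF' : ∀ v : H, ‖fderiv ℝ F v‖ ≤ L)
    (hF'' : ∀ v : H, ‖fderiv ℝ (fderiv ℝ F) v‖ ≤ L)
    (u : ℝ → H) (u'' : ℝ → H)
    (hu : ∀ t ∈ Set.Icc (0 : ℝ) T, HasDerivAt u (A (u t) + F (u t)) t)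
    (hu'' : ∀ t ∈ Set.Icc (0 : ℝ) T,
      HasDerivAt (fun s => A (u s) + F (u s)) (u'' t) t)
    (hu''cont : ContinuousOn u'' (Set.Icc 0 T)) :
    ∃ C : ℝ, ∀ N : ℕ, 1 ≤ N → ∀ n : ℕ, n ≤ N →
      ‖u ((n : ℝ) * (T / (N : ℝ))) - erem A F (T / (N : ℝ)) (u 0) n‖ ≤
        C * (T / (N : ℝ)) ^ 2 := by
  have hL0 : 0 ≤ L := le_trans (norm_nonneg _) (hF' 0)
  have hucont : ContinuousOn u (Set.Icc 0 T) := fun t ht =>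
    ((hu t ht).continuousAt).continuousWithinAt
  obtain ⟨R, hR⟩ := (isCompact_Icc : IsCompact (Set.Icc (0:ℝ) T)).exists_bound_of_continuousOn
    hucont
  have hR0 : 0 ≤ R := le_trans (norm_nonneg _) (hR 0 ⟨le_refl _, hT.le⟩)
  set K₁ := ‖A‖ * R + (L * R + ‖F 0‖) with hK₁def
  have hK₁0 : 0 ≤ K₁ := by positivity
  have hK₁ : ∀ t ∈ Set.Icc (0:ℝ) T, ‖A (u t) + F (u t)‖ ≤ K₁ := by
    intro t ht
    have h1 : ‖A (u t)‖ ≤ ‖A‖ * R :=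
      le_trans (A.le_opNorm _) (mul_le_mul_of_nonneg_left (hR t ht) (norm_nonneg A))
    have h2 : ‖F (u t)‖ ≤ L * R + ‖F 0‖ := by
      have h3 : ‖F (u t)‖ ≤ ‖F (u t) - F 0‖ + ‖F 0‖ := by
        calc ‖F (u t)‖ = ‖(F (u t) - F 0) + F 0‖ := by rw [sub_add_cancel]
          _ ≤ ‖F (u t) - F 0‖ + ‖F 0‖ := norm_add_le _ _
      have h4 : ‖F (u t) - F 0‖ ≤ L * R := by
        calc ‖F (u t) - F 0‖ ≤ L * ‖u t - 0‖ := hFlip _ _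
          _ = L * ‖u t‖ := by rw [sub_zero]
          _ ≤ L * R := mul_le_mul_of_nonneg_left (hR t ht) hL0
      linarith
    exact le_trans (norm_add_le _ _) (by linarith)
  have huinc : ∀ s t : ℝ, s ∈ Set.Icc (0:ℝ) T → t ∈ Set.Icc (0:ℝ) T → s ≤ t →
      ‖u t - u s‖ ≤ K₁ * (t - s) := by
    intro s t hs ht hst
    have := (convex_Icc (0:ℝ) T).norm_image_sub_le_of_norm_hasDerivWithin_le
      (f' := fun t => A (u t) + F (u t))
      (fun x hx => (hu x hx).hasDerivWithinAt) hK₁ hs ht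
    rwa [Real.norm_eq_abs, abs_of_nonneg (by linarith)] at this
  have hF'lip : ∀ x y : H, ‖fderiv ℝ F x - fderiv ℝ F y‖ ≤ L * ‖x - y‖ := by
    intro x y
    have := convex_univ.norm_image_sub_le_of_norm_fderiv_le (f := fderiv ℝ F)
      (fun z _ => hFdiff2 z) (fun z _ => hF'' z) (Set.mem_univ y) (Set.mem_univ x)
    exact this
  have hTaylor : ∀ x y : H, ‖F y - F x - (fderiv ℝ F x) (y - x)‖ ≤ L * ‖y - x‖ * ‖y - x‖ := by
    intro x y
    have hseg : ∀ z ∈ segment ℝ x y, ‖fderiv ℝ F z - fderiv ℝ F x‖ ≤ L * ‖y - x‖ := by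
      intro z hz
      refine le_trans (hF'lip z x) (mul_le_mul_of_nonneg_left ?_ hL0)
      have hd := dist_add_dist_of_mem_segment hz
      have h5 : dist x z ≤ dist x y := by
        have := dist_nonneg (x := z) (y := y); linarith
      rw [dist_eq_norm, dist_eq_norm] at h5
      calc ‖z - x‖ = ‖x - z‖ := by rw [norm_sub_rev]
        _ ≤ ‖x - y‖ := h5
        _ = ‖y - x‖ := by rw [norm_sub_rev]
    exact (convex_segment x y).norm_image_sub_le_of_norm_fderiv_le'
      (fun z _ => hFdiff z) hseg (left_mem_segment ℝ x y) (right_mem_segment ℝ x y)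
  set a := ‖A‖ + L with hadef
  have ha0 : 0 ≤ a := by positivity
  set c := a + (L * K₁ * T + 2 * L) with hcdef
  have hc0 : 0 ≤ c := by
    have : 0 ≤ L * K₁ * T := by positivity
    linarith
  refine ⟨Real.exp (c * T) * Real.exp (a * T) * L * K₁ ^ 2 * T, ?_⟩
  intro N hN n hn
  set Δt := T / (N : ℝ) with hΔtdef
  have hNpos : (0:ℝ) < (N : ℝ) := by exact_mod_cast hN
  have hΔt0 : 0 < Δt := div_pos hT hNpos
  have hNΔt : (N : ℝ) * Δt = T := by rw [hΔtdef]; field_simp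
  have hΔtT : Δt ≤ T := by
    rw [hΔtdef]
    exact div_le_self hT.le (by exact_mod_cast hN)
  set Q := Real.exp (a * T) * (L * K₁ ^ 2 * Δt ^ 3) with hQdef
  have hQ0 : 0 ≤ Q := by
    have h6 : (0:ℝ) ≤ L * K₁ ^ 2 * Δt ^ 3 := by positivity
    have h7 := (Real.exp_pos (a * T)).le
    exact mul_nonneg h7 h6
  set E := Real.exp (c * Δt) with hEdef
  have key : ∀ m : ℕ, m ≤ N →
      ‖u ((m : ℝ) * Δt) - erem A F Δt (u 0) m‖ ≤ Q * ∑ k ∈ Finset.range m, E ^ k := by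
    intro m
    induction m with
    | zero => intro _; simp [erem]
    | succ n ih =>
      intro hn1
      have IH := ih (Nat.le_of_succ_le hn1)
      set x := erem A F Δt (u 0) n with hx
      set J := fderiv ℝ F x with hJ
      set Kn := A + J with hKnd
      set cc := F x - J x with hccd
      set tn := (n : ℝ) * Δt with htn
      have htn0 : 0 ≤ tn := by positivity
      have htn1T : tn + Δt ≤ T := by
        have hcast : ((n : ℝ) + 1) ≤ (N : ℝ) := by exact_mod_cast hn1
        calc tn + Δt = ((n : ℝ) + 1) * Δt := by rw [htn]; ring
          _ ≤ (N : ℝ) * Δt := mul_le_mul_of_nonneg_right hcast hΔt0.le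
          _ = T := hNΔt
      have htnT : tn ≤ T := by linarith
      have hmem : ∀ s : ℝ, s ∈ Set.Icc (0:ℝ) Δt → tn + s ∈ Set.Icc (0:ℝ) T := by
        intro s hs; exact ⟨by linarith [hs.1], by linarith [hs.2]⟩
      set β := ‖u tn - x‖ with hβd
      have hβ0 : 0 ≤ β := norm_nonneg _
      set v : ℝ → H := fun s => exp (s • Kn) x + ∫ σ in (0:ℝ)..s, exp (σ • Kn) cc
        with hvd
      -- identification of the scheme with v Δt
      have herem : erem A F Δt (u 0) (n + 1) = v Δt := by
        have hcontKn : Continuous fun s : ℝ => exp (s • Kn) :=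
          continuous_iff_continuousAt.2 fun s => (hasDerivAt_exp_smul_const' (𝕂 := ℝ) Kn s).continuousAt
        have hswap : (∫ s in (0:ℝ)..Δt, exp (s • Kn)) cc
            = ∫ s in (0:ℝ)..Δt, exp (s • Kn) cc :=
          ContinuousLinearMap.intervalIntegral_apply
            (hcontKn.intervalIntegrable 0 Δt) cc
        simp only [erem]
        rw [← hx, ← hJ, ← hKnd, ← hccd, hvd, hswap]
      -- derivative of the error
      set r : ℝ → H := fun s => F (u (tn + s)) - F x - J (u (tn + s) - x) with hrd
      set e : ℝ → H := fun s => u (tn + s) - v s with hed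
      have hederiv : ∀ s ∈ Set.Ico (0:ℝ) Δt, HasDerivAt e (Kn (e s) + r s) s := by
        intro s hs
        have hmem' := hmem s ⟨hs.1, hs.2.le⟩
        have hus : HasDerivAt (fun s : ℝ => u (tn + s))
            (A (u (tn + s)) + F (u (tn + s))) s :=
          (hu _ hmem').comp_const_add tn s
        have hvs := schemeDeriv Kn x cc s
        have hsub := hus.fun_sub hvs
        convert hsub using 1
        simp only [hed, hrd, hKnd, hccd, ContinuousLinearMap.add_apply, map_sub, hvd]
        abel
      have hecont : ContinuousOn e (Set.Icc 0 Δt) := by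
        intro s hs
        have h1 : ContinuousAt (fun s : ℝ => u (tn + s)) s :=
          ((hu _ (hmem s hs)).comp_const_add tn s).continuousAt
        exact (h1.sub (schemeDeriv Kn x cc s).continuousAt).continuousWithinAt
      -- bound on the derivative
      set ε := L * K₁ ^ 2 * Δt ^ 2 + (L * K₁ * Δt + 2 * L) * β with hεd
      have hε0 : 0 ≤ ε := by
        have h1 : (0:ℝ) ≤ L * K₁ ^ 2 * Δt ^ 2 := by positivity
        have h2 : (0:ℝ) ≤ L * K₁ * Δt + 2 * L := by
          have : (0:ℝ) ≤ L * K₁ * Δt := by positivity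
          linarith
        nlinarith
      have hεbound : ∀ s ∈ Set.Ico (0:ℝ) Δt, ‖Kn (e s) + r s‖ ≤ a * ‖e s‖ + ε := by
        intro s hs
        have hmem' := hmem s ⟨hs.1, hs.2.le⟩
        have hmemtn : tn ∈ Set.Icc (0:ℝ) T := ⟨htn0, htnT⟩
        have hKnorm : ‖Kn‖ ≤ a := by
          rw [hKnd, hadef]
          exact le_trans (norm_add_le A J) (by have := hF' x; rw [hJ]; linarith)
        have h1 : ‖Kn (e s)‖ ≤ a * ‖e s‖ :=
          le_trans (Kn.le_opNorm _) (mul_le_mul_of_nonneg_right hKnorm (norm_nonneg _))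
        have hdu : ‖u (tn + s) - u tn‖ ≤ K₁ * Δt := by
          have h2 := huinc tn (tn + s) hmemtn hmem' (by linarith [hs.1])
          have h3 : K₁ * (tn + s - tn) = K₁ * s := by ring
          rw [h3] at h2
          exact le_trans h2 (mul_le_mul_of_nonneg_left hs.2.le hK₁0)
        have hr1 : ‖F (u (tn + s)) - F (u tn) - J (u (tn + s) - u tn)‖
            ≤ L * K₁ ^ 2 * Δt ^ 2 + L * K₁ * Δt * β := by
          have hT1 := hTaylor (u tn) (u (tn + s))
          have hT2 : ‖(fderiv ℝ F (u tn) - J) (u (tn + s) - u tn)‖ ≤ L * β * (K₁ * Δt) := by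
            refine le_trans ((fderiv ℝ F (u tn) - J).le_opNorm _) ?_
            have hnJ : ‖fderiv ℝ F (u tn) - J‖ ≤ L * β := by
              rw [hJ, hβd]; exact hF'lip (u tn) x
            exact mul_le_mul hnJ hdu (norm_nonneg _) (by positivity)
          have hsplit : F (u (tn + s)) - F (u tn) - J (u (tn + s) - u tn)
              = (F (u (tn + s)) - F (u tn) - (fderiv ℝ F (u tn)) (u (tn + s) - u tn))
                + (fderiv ℝ F (u tn) - J) (u (tn + s) - u tn) := by
            simp only [ContinuousLinearMap.sub_apply]
            abel
          rw [hsplit]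
          refine le_trans (norm_add_le _ _) ?_
          have hdd : ‖u (tn + s) - u tn‖ * ‖u (tn + s) - u tn‖ ≤ (K₁ * Δt) * (K₁ * Δt) :=
            mul_le_mul hdu hdu (norm_nonneg _) (by positivity)
          nlinarith [hT1, hT2, hdd, hL0]
        have hr2 : ‖F (u tn) - F x - J (u tn - x)‖ ≤ 2 * L * β := by
          have h4 : ‖F (u tn) - F x‖ ≤ L * β := by rw [hβd]; exact hFlip _ _
          have h5 : ‖J (u tn - x)‖ ≤ L * β := by
            refine le_trans (J.le_opNorm _) ?_
            rw [hβd]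
            exact mul_le_mul_of_nonneg_right (by rw [hJ]; exact hF' x) (norm_nonneg _)
          calc ‖F (u tn) - F x - J (u tn - x)‖
              ≤ ‖F (u tn) - F x‖ + ‖J (u tn - x)‖ := norm_sub_le _ _
            _ ≤ 2 * L * β := by linarith
        have hrsplit : r s = (F (u (tn + s)) - F (u tn) - J (u (tn + s) - u tn))
            + (F (u tn) - F x - J (u tn - x)) := by
          simp only [hrd, map_sub]
          abel
        have hrb : ‖r s‖ ≤ ε := by
          rw [hrsplit, hεd]
          refine le_trans (norm_add_le _ _) ?_
          nlinarith [hr1, hr2]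
        calc ‖Kn (e s) + r s‖ ≤ ‖Kn (e s)‖ + ‖r s‖ := norm_add_le _ _
          _ ≤ a * ‖e s‖ + ε := by linarith
      -- value at 0
      have he0 : e 0 = u tn - x := by
        simp [hed, hvd, intervalIntegral.integral_same, exp_zero]
      have he0n : ‖e 0‖ ≤ β := by rw [he0, hβd]
      -- Gronwall
      have hgron := norm_le_gronwallBound_of_norm_deriv_right_le hecont
        (fun s hs => (hederiv s hs).hasDerivWithinAt) he0n hεbound Δt
        ⟨hΔt0.le, le_refl Δt⟩
      rw [sub_zero] at hgron
      have hgb := gronwallBound_le_aux hβ0 ha0 hε0 hΔt0.le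
      -- step inequality
      have e1 : Real.exp (a * Δt) ≤ Real.exp (a * T) :=
        Real.exp_le_exp.2 (mul_le_mul_of_nonneg_left hΔtT ha0)
      have e2 : 1 + L * K₁ * Δt ^ 2 + 2 * L * Δt ≤ Real.exp ((L * K₁ * T + 2 * L) * Δt) := by
        have h7 := Real.add_one_le_exp ((L * K₁ * T + 2 * L) * Δt)
        have h8 : L * K₁ * Δt ^ 2 ≤ L * K₁ * T * Δt := by
          nlinarith [mul_nonneg (mul_nonneg (mul_nonneg hL0 hK₁0) hΔt0.le) (sub_nonneg.2 hΔtT)]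
        nlinarith
      have hstep : ‖e Δt‖ ≤ E * β + Q := by
        have heq : β + ε * Δt = (1 + L * K₁ * Δt ^ 2 + 2 * L * Δt) * β
            + L * K₁ ^ 2 * Δt ^ 3 := by rw [hεd]; ring
        calc ‖e Δt‖ ≤ gronwallBound β a ε Δt := hgron
          _ ≤ Real.exp (a * Δt) * (β + ε * Δt) := hgb
          _ = Real.exp (a * Δt) * ((1 + L * K₁ * Δt ^ 2 + 2 * L * Δt) * β)
              + Real.exp (a * Δt) * (L * K₁ ^ 2 * Δt ^ 3) := by rw [heq]; ring
          _ ≤ Real.exp (a * Δt) * (Real.exp ((L * K₁ * T + 2 * L) * Δt) * β)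
              + Real.exp (a * T) * (L * K₁ ^ 2 * Δt ^ 3) := by
              refine add_le_add ?_ ?_
              · refine mul_le_mul_of_nonneg_left ?_ (Real.exp_pos _).le
                exact mul_le_mul_of_nonneg_right e2 hβ0
              · refine mul_le_mul_of_nonneg_right e1 (by positivity)
          _ = E * β + Q := by
              rw [hEdef, hQdef, show Real.exp (a * Δt) * (Real.exp ((L * K₁ * T + 2 * L) * Δt) * β)
                = Real.exp (a * Δt + (L * K₁ * T + 2 * L) * Δt) * β by rw [Real.exp_add]; ring,
                show a * Δt + (L * K₁ * T + 2 * L) * Δt = c * Δt by rw [hcdef]; ring]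
      -- conclude
      have hcast2 : ((n + 1 : ℕ) : ℝ) * Δt = tn + Δt := by push_cast; rw [htn]; ring
      rw [hcast2, herem]
      calc ‖u (tn + Δt) - v Δt‖ = ‖e Δt‖ := by rw [hed]
        _ ≤ E * β + Q := hstep
        _ ≤ E * (Q * ∑ k ∈ Finset.range n, E ^ k) + Q := by
            refine add_le_add ?_ (le_refl Q)
            exact mul_le_mul_of_nonneg_left IH (Real.exp_pos _).le
        _ = Q * ∑ k ∈ Finset.range (n + 1), E ^ k := by
            rw [geom_sum_succ]; ring
  refine le_trans (key n hn) ?_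
  have hn' : (n : ℝ) ≤ (N : ℝ) := by exact_mod_cast hn
  have hsum : ∑ k ∈ Finset.range n, E ^ k ≤ (n : ℝ) * Real.exp (c * T) := by
    calc ∑ k ∈ Finset.range n, E ^ k ≤ ∑ _k ∈ Finset.range n, Real.exp (c * T) := by
          refine Finset.sum_le_sum ?_
          intro k hk
          have hk' : (k : ℝ) ≤ (N : ℝ) := by
            have : k ≤ N := le_trans (Finset.mem_range.1 hk).le hn
            exact_mod_cast this
          rw [hEdef, ← Real.exp_nat_mul]
          refine Real.exp_le_exp.2 ?_
          have h9 : (k : ℝ) * Δt ≤ T := by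
            calc (k : ℝ) * Δt ≤ (N : ℝ) * Δt := mul_le_mul_of_nonneg_right hk' hΔt0.le
              _ = T := hNΔt
          calc (k : ℝ) * (c * Δt) = c * ((k : ℝ) * Δt) := by ring
            _ ≤ c * T := mul_le_mul_of_nonneg_left h9 hc0
      _ = (n : ℝ) * Real.exp (c * T) := by
          rw [Finset.sum_const, Finset.card_range, nsmul_eq_mul]
  have h3 : (N : ℝ) * Δt ^ 3 = T * Δt ^ 2 := by
    calc (N : ℝ) * Δt ^ 3 = ((N : ℝ) * Δt) * Δt ^ 2 := by ring
      _ = T * Δt ^ 2 := by rw [hNΔt]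
  calc Q * ∑ k ∈ Finset.range n, E ^ k ≤ Q * ((n : ℝ) * Real.exp (c * T)) :=
        mul_le_mul_of_nonneg_left hsum hQ0
    _ ≤ Q * ((N : ℝ) * Real.exp (c * T)) := by
        refine mul_le_mul_of_nonneg_left ?_ hQ0
        exact mul_le_mul_of_nonneg_right hn' (Real.exp_pos _).le
    _ = Real.exp (c * T) * Real.exp (a * T) * L * K₁ ^ 2 * T * Δt ^ 2 := by
        rw [hQdef]
        linear_combination (Real.exp (a * T) * L * K₁ ^ 2 * Real.exp (c * T)) * h3
end
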